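/- The SNF encodings imply the formulae they encode: for all PLTL formulae A, proposition symbols x, y and literals l, m, the following implications are valid: (i) (□(x ⇒ A) ∧ □(x ⇒ y) ∧ □(y ⇒ ◯A) ∧ □(y ⇒ ◯y)) ⇒ □(x ⇒ □A); (ii) (□(x ⇒ ◇m) ∧ □(x ⇒ (l ∨ m)) ∧ □(x ⇒ (y ∨ m)) ∧ □(y ⇒ ◯(l ∨ m)) ∧ □(y ⇒ ◯(y ∨ m))) ⇒ □(x ⇒ (l U m)); and (iii) (□(x ⇒ (l ∨ m)) ∧ □(x ⇒ (y ∨ m)) ∧ □(y ⇒ ◯(l ∨ m)) ∧ □(y ⇒ ◯(y ∨ m))) ⇒ □(x ⇒ (l W m)). -/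
import Mathlib


/-- Syntax of Propositional Linear Temporal Logic over proposition symbols `P`. -/
inductive PLTL (P : Type) : Type
  | tru : PLTL P
  | fls : PLTL P
  | start : PLTL P
  | atom : P → PLTL P
  | neg : PLTL P → PLTL P
  | conj : PLTL P → PLTL P → PLTL P
  | disj : PLTL P → PLTL P → PLTL P
  | impl : PLTL P → PLTL P → PLTL P
  | next : PLTL P → PLTL P
  | evtl : PLTL P → PLTL P
  | alw : PLTL P → PLTL P
  | untl : PLTL P → PLTL P → PLTL P
  | unls : PLTL P → PLTL P → PLTL P

namespace PLTL

/-- Satisfaction `(σ, i) ⊨ A` of a PLTL formula in a model `σ : ℕ → Set P` at index `i`. -/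
def Sat {P : Type} (σ : ℕ → Set P) : PLTL P → ℕ → Prop
  | tru, _ => True
  | fls, _ => False
  | start, i => i = 0
  | atom p, i => p ∈ σ i
  | neg A, i => ¬ Sat σ A i
  | conj A B, i => Sat σ A i ∧ Sat σ B i
  | disj A B, i => Sat σ A i ∨ Sat σ B i
  | impl A B, i => Sat σ A i → Sat σ B i
  | next A, i => Sat σ A (i + 1)
  | evtl A, i => ∃ k, i ≤ k ∧ Sat σ A k
  | alw A, i => ∀ j, i ≤ j → Sat σ A j
  | untl A B, i => ∃ k, i ≤ k ∧ Sat σ B k ∧ ∀ j, i ≤ j → j < k → Sat σ A j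
  | unls A B, i =>
      (∃ k, i ≤ k ∧ Sat σ B k ∧ ∀ j, i ≤ j → j < k → Sat σ A j) ∨ (∀ j, i ≤ j → Sat σ A j)

/-- A formula is valid iff it is satisfied at index 0 of every model. -/
def Valid {P : Type} (A : PLTL P) : Prop := ∀ σ : ℕ → Set P, Sat σ A 0

/-- A formula with no temporal connectives is propositionally valid iff
it is satisfied at every index of every model. -/
def PropValid {P : Type} (A : PLTL P) : Prop := ∀ (σ : ℕ → Set P) (i : ℕ), Sat σ A i

/-- A literal is a proposition symbol or a negated proposition symbol. -/
def IsLiteral {P : Type} : PLTL P → Prop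
  | atom _ => True
  | neg (atom _) => True
  | _ => False

/-- A conjunction of literals. -/
def IsConjLits {P : Type} : PLTL P → Prop
  | atom _ => True
  | neg (atom _) => True
  | conj A B => IsConjLits A ∧ IsConjLits B
  | _ => False

/-- Biconditional `A ⇔ B` as an abbreviation. -/
def piff {P : Type} (A B : PLTL P) : PLTL P := conj (impl A B) (impl B A)

/-- Finite disjunction. -/
def bigOr {P : Type} (l : List (PLTL P)) : PLTL P := l.foldr disj fls

/-- Finite conjunction. -/
def bigAnd {P : Type} (l : List (PLTL P)) : PLTL P := l.foldr conj tru

/-- The proposition symbols occurring in a formula. -/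
def syms {P : Type} : PLTL P → Set P
  | tru => ∅
  | fls => ∅
  | start => ∅
  | atom p => {p}
  | neg A => syms A
  | conj A B => syms A ∪ syms B
  | disj A B => syms A ∪ syms B
  | impl A B => syms A ∪ syms B
  | next A => syms A
  | evtl A => syms A
  | alw A => syms A
  | untl A B => syms A ∪ syms B
  | unls A B => syms A ∪ syms B

end PLTL

open PLTL in
private lemma snf_helper {P : Type} (σ : ℕ → Set P) (l m : PLTL P) (y : P) (i : ℕ)
    (hx1 : Sat σ (disj l m) i) (hx2 : Sat σ (disj (atom y) m) i)
    (hy1 : ∀ j, Sat σ (atom y) j → Sat σ (disj l m) (j + 1))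
    (hy2 : ∀ j, Sat σ (atom y) j → Sat σ (disj (atom y) m) (j + 1)) :
    ∀ j, i ≤ j → (∀ j', i ≤ j' → j' < j → ¬ Sat σ m j') →
      Sat σ (disj l m) j ∧ Sat σ (disj (atom y) m) j := by
  intro j hj
  induction j, hj using Nat.le_induction with
  | base => intro _; exact ⟨hx1, hx2⟩
  | succ n hn ih =>
    intro hnm
    have h := ih (fun j' h1 h2 => hnm j' h1 (Nat.lt_succ_of_lt h2))
    have hy : Sat σ (atom y) n := by
      rcases h.2 with h | h
      · exact h
      · exact absurd h (hnm n hn (Nat.lt_succ_self n))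
    exact ⟨hy1 n hy, hy2 n hy⟩

open PLTL in
/-- the SNF encodings of □, U and W imply the formulae they encode. -/

theorem stmt_19 {P : Type} [Countable P] (A : PLTL P) (x y : P) (l m : PLTL P)
    (hl : IsLiteral l) (hm : IsLiteral m) :
    Valid (impl
      (conj (conj (alw (impl (atom x) A)) (alw (impl (atom x) (atom y))))
            (conj (alw (impl (atom y) (next A))) (alw (impl (atom y) (next (atom y))))))
      (alw (impl (atom x) (alw A)))) ∧
    Valid (impl
      (conj (alw (impl (atom x) (evtl m)))
        (conj (conj (alw (impl (atom x) (disj l m)))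
                    (alw (impl (atom x) (disj (atom y) m))))
              (conj (alw (impl (atom y) (next (disj l m))))
                    (alw (impl (atom y) (next (disj (atom y) m)))))))
      (alw (impl (atom x) (untl l m)))) ∧
    Valid (impl
      (conj (conj (alw (impl (atom x) (disj l m)))
                  (alw (impl (atom x) (disj (atom y) m))))
            (conj (alw (impl (atom y) (next (disj l m))))
                  (alw (impl (atom y) (next (disj (atom y) m))))))
      (alw (impl (atom x) (unls l m)))) := by
  refine ⟨?_, ?_, ?_⟩
  · intro σ
    rintro ⟨⟨hxA, hxy⟩, hyA, hyy⟩ i _ hx j hij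
    have hy : ∀ k, i ≤ k → Sat σ (atom y) k := by
      intro k hk
      induction k, hk using Nat.le_induction with
      | base => exact hxy i (Nat.zero_le i) hx
      | succ n hn ih => exact hyy n (Nat.zero_le n) ih
    rcases Nat.eq_or_lt_of_le hij with rfl | hlt
    · exact hxA _ (Nat.zero_le _) hx
    · obtain ⟨k, rfl⟩ := Nat.exists_eq_add_of_lt hlt
      exact hyA (i + k) (Nat.zero_le _) (hy (i + k) (Nat.le_add_right i k))
  · intro σ
    rintro ⟨hev, ⟨hx1, hx2⟩, hy1, hy2⟩ i _ hx
    obtain ⟨k, hik, hmk⟩ := hev i (Nat.zero_le i) hx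
    have hwf : ∃ k, (i ≤ k ∧ Sat σ m k) := ⟨k, hik, hmk⟩
    classical
    set k0 := Nat.find hwf with hk0def
    obtain ⟨hik0, hmk0⟩ := Nat.find_spec hwf
    have hnm : ∀ j', i ≤ j' → j' < k0 → ¬ Sat σ m j' := fun j' h1 h2 hm' =>
      Nat.find_min hwf h2 ⟨h1, hm'⟩
    refine ⟨k0, hik0, hmk0, ?_⟩
    intro j h1 h2
    have h := snf_helper σ l m y i (hx1 i (Nat.zero_le i) hx) (hx2 i (Nat.zero_le i) hx)
      (fun j hj => hy1 j (Nat.zero_le j) hj) (fun j hj => hy2 j (Nat.zero_le j) hj)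
      j h1 (fun j' ha hb => hnm j' ha (hb.trans h2))
    rcases h.1 with h | h
    · exact h
    · exact absurd h (hnm j h1 h2)
  · intro σ
    rintro ⟨⟨hx1, hx2⟩, hy1, hy2⟩ i _ hx
    have H := snf_helper σ l m y i (hx1 i (Nat.zero_le i) hx) (hx2 i (Nat.zero_le i) hx)
      (fun j hj => hy1 j (Nat.zero_le j) hj) (fun j hj => hy2 j (Nat.zero_le j) hj)
    by_cases hev : ∃ k, i ≤ k ∧ Sat σ m k
    · classical
      set k0 := Nat.find hev with hk0def
      obtain ⟨hik0, hmk0⟩ := Nat.find_spec hev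
      have hnm : ∀ j', i ≤ j' → j' < k0 → ¬ Sat σ m j' := fun j' h1 h2 hm' =>
        Nat.find_min hev h2 ⟨h1, hm'⟩
      refine Or.inl ⟨k0, hik0, hmk0, ?_⟩
      intro j h1 h2
      rcases (H j h1 (fun j' ha hb => hnm j' ha (hb.trans h2))).1 with h | h
      · exact h
      · exact absurd h (hnm j h1 h2)
    · push_neg at hev
      refine Or.inr (fun j hj => ?_)
      rcases (H j hj (fun j' ha _ => hev j' ha)).1 with h | h
      · exact h
      · exact absurd h (hev j hj)
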